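/- arXiv:1111.6413 — 2 statements merged into one kernel-verified Lean document; each statement's English description precedes it below -/
import Mathlib

section
/- Let I be the category of finite sets 𝐧 = {1,…,n} and injections, let k ≥ 1, and let P_k : (⊔^k ↓ I) → I^k be the projection functor from the comma category of the k-fold concatenation functor ⊔^k : I^k → I. Then for every object (𝐧₁,…,𝐧ₖ) of I^k, the comma category ((𝐧₁,…,𝐧ₖ) ↓ P_k) has an initial object. Consequently P_k is a final functor. -/
open CategoryTheory

/-- Objects of the category `I`: the finite sets `𝐧 = {1,…,n}`, encoded by their size. -/
structure IObj : Type where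
  n : ℕ

/-- The category `I` of finite sets and injections. -/
instance : Category IObj where
  Hom a b := Fin a.n ↪ Fin b.n
  id a := Function.Embedding.refl _
  comp f g := f.trans g
  id_comp _ := rfl
  comp_id _ := rfl
  assoc _ _ _ := rfl

/-- Concatenation of injections. -/
def concatMap {m m' n n' : ℕ} (f : Fin m ↪ Fin m') (g : Fin n ↪ Fin n') :
    Fin (m + n) ↪ Fin (m' + n') where
  toFun x :=
    if h : (x : ℕ) < m then ⟨(f ⟨x, h⟩ : ℕ), by have := (f ⟨x, h⟩).isLt; omega⟩
    else ⟨m' + (g ⟨(x : ℕ) - m, by omega⟩ : ℕ), by have := (g ⟨(x : ℕ) - m, by omega⟩).isLt; omega⟩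
  inj' := by
    intro a b hab
    have hv := congrArg Fin.val hab
    by_cases h1 : (a : ℕ) < m <;> by_cases h2 : (b : ℕ) < m <;>
      simp only [h1, h2, dif_pos, dif_neg, not_false_iff] at hv
    · have h3 : f ⟨(a : ℕ), h1⟩ = f ⟨(b : ℕ), h2⟩ := Fin.ext hv
      have h4 := congrArg Fin.val (f.injective h3)
      exact Fin.ext h4
    · exact absurd hv (by have := (f ⟨(a : ℕ), h1⟩).isLt; omega)
    · exact absurd hv (by have := (f ⟨(b : ℕ), h2⟩).isLt; omega)
    · have hg : (g ⟨(a : ℕ) - m, by omega⟩ : ℕ) = (g ⟨(b : ℕ) - m, by omega⟩ : ℕ) := by omega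
      have h4 := congrArg Fin.val (g.injective (Fin.ext hg))
      simp only at h4
      exact Fin.ext (by omega)

lemma concatMap_val_lt {m m' n n' : ℕ} (f : Fin m ↪ Fin m') (g : Fin n ↪ Fin n')
    (x : Fin (m + n)) (h : (x : ℕ) < m) :
    ((concatMap f g) x : ℕ) = (f ⟨(x : ℕ), h⟩ : ℕ) := by
  simp only [concatMap, Function.Embedding.coeFn_mk, dif_pos h]
  exact congrArg Fin.val (dif_pos h)

lemma concatMap_val_ge {m m' n n' : ℕ} (f : Fin m ↪ Fin m') (g : Fin n ↪ Fin n')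
    (x : Fin (m + n)) (h : ¬ (x : ℕ) < m) :
    ((concatMap f g) x : ℕ) = m' + (g ⟨(x : ℕ) - m, by omega⟩ : ℕ) := by
  simp only [concatMap, Function.Embedding.coeFn_mk, dif_neg h]
  exact congrArg Fin.val (dif_neg h)

/-- View a morphism of `I` as an embedding. -/
abbrev toEmb {a b : IObj} (f : a ⟶ b) : Fin a.n ↪ Fin b.n := f

/-- The concatenation (symmetric monoidal) functor `⊔ : I × I → I`. -/
def concatF : IObj × IObj ⥤ IObj where
  obj p := ⟨p.1.n + p.2.n⟩
  map {p q} f := concatMap f.1 f.2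
  map_id := by
    intro p
    apply Function.Embedding.ext
    intro x
    apply Fin.ext
    have hx : (x : ℕ) < p.1.n + p.2.n := x.isLt
    change ((concatMap (Function.Embedding.refl (Fin p.1.n))
      (Function.Embedding.refl (Fin p.2.n))) x : ℕ) = (x : ℕ)
    by_cases h : (x : ℕ) < p.1.n
    · rw [concatMap_val_lt _ _ _ h]; rfl
    · rw [concatMap_val_ge _ _ _ h]
      have h5 : (Function.Embedding.refl (Fin p.2.n) ⟨(x : ℕ) - p.1.n, by omega⟩ : ℕ)
          = (x : ℕ) - p.1.n := rfl
      omega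
  map_comp := by
    intro p q r f g
    obtain ⟨f1, f2⟩ := f
    obtain ⟨g1, g2⟩ := g
    apply Function.Embedding.ext
    intro x
    apply Fin.ext
    have hx : (x : ℕ) < p.1.n + p.2.n := x.isLt
    change ((concatMap ((toEmb f1).trans (toEmb g1)) ((toEmb f2).trans (toEmb g2))) x : ℕ)
      = ((concatMap (toEmb g1) (toEmb g2)) ((concatMap (toEmb f1) (toEmb f2)) x) : ℕ)
    by_cases h : (x : ℕ) < p.1.n
    · rw [concatMap_val_lt _ _ _ h]
      have hy := concatMap_val_lt (toEmb f1) (toEmb f2) x h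
      have hcond : ((concatMap (toEmb f1) (toEmb f2)) x : ℕ) < q.1.n := by
        rw [hy]; exact ((toEmb f1) ⟨(x : ℕ), h⟩).isLt
      rw [concatMap_val_lt (toEmb g1) (toEmb g2) _ hcond]
      have harg : (⟨((concatMap (toEmb f1) (toEmb f2)) x : ℕ), hcond⟩ : Fin q.1.n)
          = (toEmb f1) ⟨(x : ℕ), h⟩ := Fin.ext hy
      exact (congrArg (fun z : Fin q.1.n => ((toEmb g1) z : ℕ)) harg).symm
    · rw [concatMap_val_ge _ _ _ h]
      have hy := concatMap_val_ge (toEmb f1) (toEmb f2) x h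
      have hcond : ¬ ((concatMap (toEmb f1) (toEmb f2)) x : ℕ) < q.1.n := by omega
      rw [concatMap_val_ge (toEmb g1) (toEmb g2) _ hcond]
      have harg : (⟨((concatMap (toEmb f1) (toEmb f2)) x : ℕ) - q.1.n, by omega⟩ : Fin q.2.n)
          = (toEmb f2) ⟨(x : ℕ) - p.1.n, by omega⟩ := Fin.ext (by
            show ((concatMap (toEmb f1) (toEmb f2)) x : ℕ) - q.1.n
              = ((toEmb f2) ⟨(x : ℕ) - p.1.n, by omega⟩ : ℕ)
            omega)
      exact (congrArg (fun z : Fin q.2.n => r.1.n + ((toEmb g2) z : ℕ)) harg).symm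

/-- The external product of two `I`-diagrams of sets. -/
@[simps]
def extProd (X Y : IObj ⥤ Type) : IObj × IObj ⥤ Type where
  obj p := X.obj p.1 × Y.obj p.2
  map f := TypeCat.ofHom (fun a => (X.map f.1 a.1, Y.map f.2 a.2))
  map_id := by intro p; ext a <;> simp
  map_comp := by intro p q r f g; ext a <;> simp

/-- Day convolution `X ⊠ Y` of `I`-diagrams of sets: the left Kan extension of the
external product along concatenation. -/
noncomputable def dayConv (X Y : IObj ⥤ Type) : IObj ⥤ Type :=
  (Functor.lan concatF).obj (extProd X Y)

lemma concatMap_refl (m n : ℕ) :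
    concatMap (Function.Embedding.refl (Fin m)) (Function.Embedding.refl (Fin n))
      = Function.Embedding.refl (Fin (m + n)) := by
  apply Function.Embedding.ext
  intro x
  apply Fin.ext
  have hx : (x : ℕ) < m + n := x.isLt
  by_cases h : (x : ℕ) < m
  · rw [concatMap_val_lt _ _ _ h]; rfl
  · rw [concatMap_val_ge _ _ _ h]
    have h5 : (Function.Embedding.refl (Fin n) ⟨(x : ℕ) - m, by omega⟩ : ℕ)
        = (x : ℕ) - m := rfl
    show m + (Function.Embedding.refl (Fin n) ⟨(x : ℕ) - m, by omega⟩ : ℕ) = (x : ℕ)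
    omega

lemma concatMap_trans {m m' m'' n n' n'' : ℕ}
    (f1 : Fin m ↪ Fin m') (g1 : Fin m' ↪ Fin m'')
    (f2 : Fin n ↪ Fin n') (g2 : Fin n' ↪ Fin n'') :
    concatMap (f1.trans g1) (f2.trans g2)
      = (concatMap f1 f2).trans (concatMap g1 g2) := by
  apply Function.Embedding.ext
  intro x
  apply Fin.ext
  have hx : (x : ℕ) < m + n := x.isLt
  show ((concatMap (f1.trans g1) (f2.trans g2)) x : ℕ)
    = ((concatMap g1 g2) ((concatMap f1 f2) x) : ℕ)
  by_cases h : (x : ℕ) < m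
  · rw [concatMap_val_lt _ _ _ h]
    have hy := concatMap_val_lt f1 f2 x h
    have hcond : ((concatMap f1 f2) x : ℕ) < m' := by
      rw [hy]; exact (f1 ⟨(x : ℕ), h⟩).isLt
    rw [concatMap_val_lt g1 g2 _ hcond]
    have harg : (⟨((concatMap f1 f2) x : ℕ), hcond⟩ : Fin m') = f1 ⟨(x : ℕ), h⟩ :=
      Fin.ext hy
    exact (congrArg (fun z : Fin m' => ((g1 z) : ℕ)) harg).symm
  · rw [concatMap_val_ge _ _ _ h]
    have hy := concatMap_val_ge f1 f2 x h
    have hcond : ¬ ((concatMap f1 f2) x : ℕ) < m' := by omega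
    rw [concatMap_val_ge g1 g2 _ hcond]
    have harg : (⟨((concatMap f1 f2) x : ℕ) - m', by omega⟩ : Fin n')
        = f2 ⟨(x : ℕ) - m, by omega⟩ := Fin.ext (by
          show ((concatMap f1 f2) x : ℕ) - m' = (f2 ⟨(x : ℕ) - m, by omega⟩ : ℕ)
          omega)
    exact (congrArg (fun z : Fin n' => m'' + ((g2 z) : ℕ)) harg).symm

/-- The `k`-fold concatenation functor `⊔^k : I^k → I`. -/
def concatK : (k : ℕ) → ((Fin k → IObj) ⥤ IObj)
  | 0 => (Functor.const _).obj ⟨0⟩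
  | (k + 1) =>
    { obj := fun x => ⟨(x 0).n + ((concatK k).obj (fun i : Fin k => x i.succ)).n⟩
      map := fun {x y} f =>
        concatMap (toEmb (f 0)) (toEmb ((concatK k).map (fun i : Fin k => f i.succ)))
      map_id := by
        intro x
        have h : (concatK k).map (fun i : Fin k => (𝟙 x : x ⟶ x) i.succ)
            = 𝟙 ((concatK k).obj (fun i : Fin k => x i.succ)) :=
          (concatK k).map_id (fun i : Fin k => x i.succ)
        show concatMap (toEmb ((𝟙 x : x ⟶ x) 0))
            (toEmb ((concatK k).map (fun i : Fin k => (𝟙 x : x ⟶ x) i.succ))) = _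
        rw [h]
        exact concatMap_refl _ _
      map_comp := by
        intro x y z f g
        have h : (concatK k).map (fun i : Fin k => (f ≫ g : x ⟶ z) i.succ)
            = (concatK k).map (fun i : Fin k => f i.succ) ≫
                (concatK k).map (fun i : Fin k => g i.succ) :=
          (concatK k).map_comp (fun i : Fin k => f i.succ) (fun i : Fin k => g i.succ)
        show concatMap (toEmb ((f ≫ g : x ⟶ z) 0))
            (toEmb ((concatK k).map (fun i : Fin k => (f ≫ g : x ⟶ z) i.succ))) = _
        rw [h]
        exact concatMap_trans _ _ _ _ }

lemma isConnected_of_hasInitial {C : Type*} [Category C] [Limits.HasInitial C] :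
    IsConnected C :=
  @zigzag_isConnected _ _ ⟨Limits.initial C⟩ fun j₁ j₂ =>
    Relation.ReflTransGen.tail
      (Relation.ReflTransGen.single (Or.inr ⟨Limits.initial.to j₁⟩))
      (Or.inl ⟨Limits.initial.to j₂⟩)

open Limits in
/-- for `k ≥ 1`, each comma category `((𝐧₁,…,𝐧ₖ) ↓ P_k)` of the projection
`P_k : (⊔^k ↓ I) → I^k` has an initial object; consequently `P_k` is a final functor. -/
theorem projection_comma_initial_and_final (k : ℕ) (hk : 1 ≤ k) :
    (∀ d : Fin k → IObj,
        HasInitial (StructuredArrow d (Comma.fst (concatK k) (𝟭 IObj)))) ∧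
      (Comma.fst (concatK k) (𝟭 IObj)).Final := by
  have hinit : ∀ d : Fin k → IObj,
      HasInitial (StructuredArrow d (Comma.fst (concatK k) (𝟭 IObj))) := by
    intro d
    let F := Comma.fst (concatK k) (𝟭 IObj)
    let c₀ : Comma (concatK k) (𝟭 IObj) :=
      { left := d, right := (concatK k).obj d, hom := 𝟙 _ }
    let i₀ : StructuredArrow d F := StructuredArrow.mk (Y := c₀) (𝟙 d)
    let gc : ∀ Y : StructuredArrow d F, c₀ ⟶ Y.right := fun Y =>
      CommaMorphism.mk (left := Y.hom)
        (right := (concatK k).map Y.hom ≫ Y.right.hom) (by simp [c₀])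
    let hg : ∀ Y : StructuredArrow d F, i₀ ⟶ Y := fun Y =>
      StructuredArrow.homMk (f := i₀) (f' := Y) (gc Y)
        rfl
    have : IsInitial i₀ := by
      apply IsInitial.ofUniqueHom hg
      · intro Y m
        apply StructuredArrow.hom_ext
        have h1 : m.right.left = Y.hom := by
          exact StructuredArrow.w m
        have h2 : m.right.right = (concatK k).map Y.hom ≫ Y.right.hom := by
          have hw := m.right.w
          simp only [Functor.id_map] at hw
          rw [show i₀.right.hom = 𝟙 _ from rfl, Category.id_comp] at hw
          rw [← hw, h1]
        apply CommaMorphism.ext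
        · exact h1
        · exact h2
    exact this.hasInitial
  refine ⟨hinit, ⟨fun d => ?_⟩⟩
  have := hinit d
  exact isConnected_of_hasInitial
end

section
/- Let X : I → Set be an I-diagram of sets such that every morphism 𝐦 → 𝐧 of I induces an injection X(𝐦) → X(𝐧), and such that for all l, m, n ≥ 0, in the commutative square induced by the order-preserving inclusions 𝐦 → 𝐦⊔𝐧, 𝐦 → 𝐥⊔𝐦, 𝐦⊔𝐧 → 𝐥⊔𝐦⊔𝐧, 𝐥⊔𝐦 → 𝐥⊔𝐦⊔𝐧, the intersection (inside X(𝐥⊔𝐦⊔𝐧)) of the images of X(𝐥⊔𝐦) and X(𝐦⊔𝐧) equals the image of X(𝐦). Then for every n the latching map L_𝐧(X) → X(𝐧) is injective, where L_𝐧(X) = colim over the non-isomorphisms 𝐦 → 𝐧 of X(𝐦). -/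
open CategoryTheory

/-- The order-preserving inclusion `𝐦 → 𝐦⊔𝐧`. -/
def inclHomA (m n : ℕ) : (⟨m⟩ : IObj) ⟶ ⟨m + n⟩ :=
  ⟨fun s => ⟨(s : ℕ), by have hs : (s : ℕ) < m := s.isLt; show (s : ℕ) < m + n; omega⟩,
    fun s t h => Fin.ext (by
      have := congrArg Fin.val h; simpa using this)⟩

/-- The order-preserving inclusion `𝐦 → 𝐥⊔𝐦`. -/
def inclHomB (l m : ℕ) : (⟨m⟩ : IObj) ⟶ ⟨l + m⟩ :=
  ⟨fun s => ⟨l + (s : ℕ), by have hs : (s : ℕ) < m := s.isLt; show l + (s : ℕ) < l + m; omega⟩,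
    fun s t h => Fin.ext (by
      have := congrArg Fin.val h; simp at this; omega)⟩

/-- The order-preserving inclusion `𝐦⊔𝐧 → 𝐥⊔𝐦⊔𝐧`. -/
def inclHomC (l m n : ℕ) : (⟨m + n⟩ : IObj) ⟶ ⟨l + m + n⟩ :=
  ⟨fun s => ⟨l + (s : ℕ), by
      have hs : (s : ℕ) < m + n := s.isLt; show l + (s : ℕ) < l + m + n; omega⟩,
    fun s t h => Fin.ext (by
      have := congrArg Fin.val h; simp at this; omega)⟩

/-- The order-preserving inclusion `𝐥⊔𝐦 → 𝐥⊔𝐦⊔𝐧`. -/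
def inclHomD (l m n : ℕ) : (⟨l + m⟩ : IObj) ⟶ ⟨l + m + n⟩ :=
  ⟨fun s => ⟨(s : ℕ), by
      have hs : (s : ℕ) < l + m := s.isLt; show (s : ℕ) < l + m + n; omega⟩,
    fun s t h => Fin.ext (by
      have := congrArg Fin.val h; simpa using this)⟩

/-- The full subcategory of `(I ↓ 𝐧)` on the non-isomorphisms. -/
abbrev boundaryOver (a : IObj) :=
  ObjectProperty.FullSubcategory (fun f : Over a => ¬ IsIso f.hom)

/-- The latching object `L_𝐧(X)`, a colimit over the non-isomorphisms `𝐦 → 𝐧`. -/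
noncomputable def latchingObj (X : IObj ⥤ Type) (a : IObj) : Type :=
  Limits.colimit
    (ObjectProperty.ι (fun f : Over a => ¬ IsIso f.hom) ⋙ Over.forget a ⋙ X)

/-- The latching map `L_𝐧(X) → X(𝐧)`. -/
noncomputable def latchingMap (X : IObj ⥤ Type) (a : IObj) :
    latchingObj X a → X.obj a :=
  Limits.colimit.desc
    (ObjectProperty.ι (fun f : Over a => ¬ IsIso f.hom) ⋙ Over.forget a ⋙ X)
    { pt := X.obj a
      ι :=
        { app := fun f => X.map f.obj.hom
          naturality := by
            intro f g u
            ext z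
            have hw : u.hom.left ≫ g.obj.hom = f.obj.hom := Over.w u.hom
            show X.map g.obj.hom (X.map u.hom.left z) = X.map f.obj.hom z
            rw [← hw, Functor.map_comp]; rfl } }


def blockFun {N l m k : ℕ} (eL : Fin l → Fin N) (eM : Fin m → Fin N) (eK : Fin k → Fin N)
    (i : Fin (l + m + k)) : Fin N :=
  if h : (i : ℕ) < l then eL ⟨(i : ℕ), h⟩
  else if h2 : (i : ℕ) < l + m then eM ⟨(i : ℕ) - l, by omega⟩
  else eK ⟨(i : ℕ) - l - m, by have := i.isLt; omega⟩

lemma blockFun_lt {N l m k : ℕ} (eL : Fin l → Fin N) (eM : Fin m → Fin N) (eK : Fin k → Fin N)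
    (i : Fin (l + m + k)) (h : (i : ℕ) < l) : blockFun eL eM eK i = eL ⟨(i : ℕ), h⟩ :=
  dif_pos h

lemma blockFun_mid {N l m k : ℕ} (eL : Fin l → Fin N) (eM : Fin m → Fin N) (eK : Fin k → Fin N)
    (i : Fin (l + m + k)) (h : ¬ (i : ℕ) < l) (h2 : (i : ℕ) < l + m) :
    blockFun eL eM eK i = eM ⟨(i : ℕ) - l, by omega⟩ := by
  rw [blockFun, dif_neg h, dif_pos h2]

lemma blockFun_hi {N l m k : ℕ} (eL : Fin l → Fin N) (eM : Fin m → Fin N) (eK : Fin k → Fin N)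
    (i : Fin (l + m + k)) (h : ¬ (i : ℕ) < l) (h2 : ¬ (i : ℕ) < l + m) :
    blockFun eL eM eK i = eK ⟨(i : ℕ) - l - m, by have := i.isLt; omega⟩ := by
  rw [blockFun, dif_neg h, dif_neg h2]

lemma num_blocks {N l m k : ℕ} (eL : Fin l → Fin N) (eM : Fin m → Fin N) (eK : Fin k → Fin N)
    (hLinj : Function.Injective eL) (hMinj : Function.Injective eM)
    (hKinj : Function.Injective eK)
    (hLM : ∀ i j, eL i ≠ eM j) (hLK : ∀ i j, eL i ≠ eK j) (hMK : ∀ i j, eM i ≠ eK j) :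
    ∃ j : Fin (l + m + k) ↪ Fin N,
      (∀ i : Fin l, j ⟨(i : ℕ), by have := i.isLt; omega⟩ = eL i) ∧
      (∀ i : Fin m, j ⟨l + (i : ℕ), by have := i.isLt; omega⟩ = eM i) ∧
      (∀ i : Fin k, j ⟨l + m + (i : ℕ), by have := i.isLt; omega⟩ = eK i) := by
  have hinj : Function.Injective (blockFun eL eM eK) := by
    intro i1 i2 h
    rcases lt_or_ge (i1 : ℕ) l with c1 | c1
    · rcases lt_or_ge (i2 : ℕ) l with c2 | c2
      · rw [blockFun_lt _ _ _ i1 c1, blockFun_lt _ _ _ i2 c2] at h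
        exact Fin.ext (by simpa using congrArg Fin.val (hLinj h))
      · rcases lt_or_ge (i2 : ℕ) (l + m) with c2' | c2'
        · rw [blockFun_lt _ _ _ i1 c1, blockFun_mid _ _ _ i2 (by omega) c2'] at h
          exact absurd h (hLM _ _)
        · rw [blockFun_lt _ _ _ i1 c1, blockFun_hi _ _ _ i2 (by omega) (by omega)] at h
          exact absurd h (hLK _ _)
    · rcases lt_or_ge (i1 : ℕ) (l + m) with c1' | c1'
      · rcases lt_or_ge (i2 : ℕ) l with c2 | c2
        · rw [blockFun_mid _ _ _ i1 (by omega) c1', blockFun_lt _ _ _ i2 c2] at h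
          exact absurd h.symm (hLM _ _)
        · rcases lt_or_ge (i2 : ℕ) (l + m) with c2' | c2'
          · rw [blockFun_mid _ _ _ i1 (by omega) c1', blockFun_mid _ _ _ i2 (by omega) c2'] at h
            have := congrArg Fin.val (hMinj h)
            simp only at this
            exact Fin.ext (by omega)
          · rw [blockFun_mid _ _ _ i1 (by omega) c1',
              blockFun_hi _ _ _ i2 (by omega) (by omega)] at h
            exact absurd h (hMK _ _)
      · rcases lt_or_ge (i2 : ℕ) l with c2 | c2
        · rw [blockFun_hi _ _ _ i1 (by omega) (by omega), blockFun_lt _ _ _ i2 c2] at h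
          exact absurd h.symm (hLK _ _)
        · rcases lt_or_ge (i2 : ℕ) (l + m) with c2' | c2'
          · rw [blockFun_hi _ _ _ i1 (by omega) (by omega),
              blockFun_mid _ _ _ i2 (by omega) c2'] at h
            exact absurd h.symm (hMK _ _)
          · rw [blockFun_hi _ _ _ i1 (by omega) (by omega),
              blockFun_hi _ _ _ i2 (by omega) (by omega)] at h
            have := congrArg Fin.val (hKinj h)
            simp only at this
            exact Fin.ext (by omega)
  refine ⟨⟨blockFun eL eM eK, hinj⟩, ?_, ?_, ?_⟩
  · intro i
    show blockFun eL eM eK _ = _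
    rw [blockFun_lt _ _ _ _ (show ((i : ℕ)) < l from i.isLt)]
  · intro i
    show blockFun eL eM eK _ = _
    rw [blockFun_mid _ _ _ _ (show ¬ l + (i : ℕ) < l from by omega)
      (show l + (i : ℕ) < l + m from by have := i.isLt; omega)]
    congr 1
    apply Fin.ext
    show l + (i:ℕ) - l = (i:ℕ)
    omega
  · intro i
    show blockFun eL eM eK _ = _
    rw [blockFun_hi _ _ _ _ (show ¬ l + m + (i : ℕ) < l from by omega)
      (show ¬ l + m + (i : ℕ) < l + m from by omega)]
    congr 1
    apply Fin.ext
    show l + m + (i:ℕ) - l - m = (i:ℕ)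
    omega

lemma exists_enum {N : ℕ} (L : Finset (Fin N)) :
    ∃ eL : Fin L.card → Fin N, Function.Injective eL ∧ (∀ i, eL i ∈ L) ∧
      ∀ v ∈ L, ∃ i, eL i = v := by
  refine ⟨fun i => ((L.equivFin.symm i : L) : Fin N), ?_, fun i => (L.equivFin.symm i).2, ?_⟩
  · intro i j h
    exact L.equivFin.symm.injective (Subtype.ext h)
  · intro v hv
    exact ⟨L.equivFin ⟨v, hv⟩, by simp⟩

lemma three_blocks {N : ℕ} (L M K : Finset (Fin N))
    (hLM : ∀ x, x ∈ L → x ∉ M) (hLK : ∀ x, x ∈ L → x ∉ K) (hMK : ∀ x, x ∈ M → x ∉ K) :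
    ∃ j : Fin (L.card + M.card + K.card) ↪ Fin N,
      (∀ v ∈ L, ∃ i : Fin L.card, j ⟨(i : ℕ), by have := i.isLt; omega⟩ = v) ∧
      (∀ v ∈ M, ∃ i : Fin M.card, j ⟨L.card + (i : ℕ), by have := i.isLt; omega⟩ = v) ∧
      (∀ v ∈ K, ∃ i : Fin K.card, j ⟨L.card + M.card + (i : ℕ), by have := i.isLt; omega⟩ = v) := by
  obtain ⟨eL, hLinj, heL, hLsurj⟩ := exists_enum L
  obtain ⟨eM, hMinj, heM, hMsurj⟩ := exists_enum M
  obtain ⟨eK, hKinj, heK, hKsurj⟩ := exists_enum K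
  obtain ⟨j, hj1, hj2, hj3⟩ := num_blocks eL eM eK hLinj hMinj hKinj
    (fun i j' h => hLM _ (heL i) (h ▸ heM j'))
    (fun i j' h => hLK _ (heL i) (h ▸ heK j'))
    (fun i j' h => hMK _ (heM i) (h ▸ heK j'))
  refine ⟨j, ?_, ?_, ?_⟩
  · intro v hv
    obtain ⟨i, hi⟩ := hLsurj v hv
    exact ⟨i, by rw [hj1 i]; exact hi⟩
  · intro v hv
    obtain ⟨i, hi⟩ := hMsurj v hv
    exact ⟨i, by rw [hj2 i]; exact hi⟩
  · intro v hv
    obtain ⟨i, hi⟩ := hKsurj v hv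
    exact ⟨i, by rw [hj3 i]; exact hi⟩

lemma I_le_of_hom {a b : IObj} (f : a ⟶ b) : a.n ≤ b.n := by
  have := Fintype.card_le_of_embedding (toEmb f)
  simpa using this

lemma I_isIso_of_n_eq {a b : IObj} (f : a ⟶ b) (h : a.n = b.n) : IsIso f := by
  obtain ⟨na⟩ := a
  obtain ⟨nb⟩ := b
  simp only at h
  subst h
  have hbij : Function.Bijective (toEmb f) :=
    (Finite.injective_iff_bijective).1 (toEmb f).injective
  let e : Fin na ≃ Fin na := Equiv.ofBijective _ hbij
  refine ⟨(e.symm.toEmbedding : (⟨na⟩ : IObj) ⟶ ⟨na⟩), ?_, ?_⟩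
  · exact Function.Embedding.ext fun x => e.symm_apply_apply x
  · exact Function.Embedding.ext fun x => e.apply_symm_apply x

lemma I_le_of_isIso {a b : IObj} (f : a ⟶ b) (h : IsIso f) : b.n ≤ a.n :=
  I_le_of_hom (inv f)

lemma factor_emb {a b N : ℕ} (e1 : Fin a ↪ Fin N) (e2 : Fin b ↪ Fin N)
    (h : ∀ s, ∃ t, e2 t = e1 s) : ∃ u : Fin a ↪ Fin b, ∀ s, e2 (u s) = e1 s := by
  choose u hu using h
  exact ⟨⟨u, fun s t hst => e1.injective (by rw [← hu s, ← hu t, hst])⟩, hu⟩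

lemma exists_factorization {p q N : ℕ} (f : Fin p ↪ Fin N) (g : Fin q ↪ Fin N) :
    ∃ (l m k : ℕ) (j : Fin (l + m + k) ↪ Fin N) (al : Fin p ↪ Fin (l + m))
      (be : Fin q ↪ Fin (m + k)),
      p = l + m ∧ q = m + k ∧
      (∀ s, j (toEmb (inclHomD l m k) (al s)) = f s) ∧
      (∀ s, j (toEmb (inclHomC l m k) (be s)) = g s) := by
  classical
  set A : Finset (Fin N) := Finset.univ.map f with hA
  set B : Finset (Fin N) := Finset.univ.map g with hB
  have dis1 : ∀ x, x ∈ A \ B → x ∉ A ∩ B := by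
    intro x hx
    simp only [Finset.mem_sdiff, Finset.mem_inter] at hx ⊢
    tauto
  have dis2 : ∀ x, x ∈ A \ B → x ∉ B \ A := by
    intro x hx
    simp only [Finset.mem_sdiff] at hx ⊢
    tauto
  have dis3 : ∀ x, x ∈ A ∩ B → x ∉ B \ A := by
    intro x hx
    simp only [Finset.mem_sdiff, Finset.mem_inter] at hx ⊢
    tauto
  obtain ⟨j, hjL, hjM, hjK⟩ := three_blocks (A \ B) (A ∩ B) (B \ A) dis1 dis2 dis3
  have hAcard : A.card = p := by rw [hA, Finset.card_map, Finset.card_fin]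
  have hBcard : B.card = q := by rw [hB, Finset.card_map, Finset.card_fin]
  have hp : p = (A \ B).card + (A ∩ B).card := by
    have := Finset.card_sdiff_add_card_inter A B
    omega
  have hq : q = (A ∩ B).card + (B \ A).card := by
    have h' := Finset.card_inter_add_card_sdiff B A
    rw [Finset.inter_comm] at h'
    omega
  have hfA : ∀ s, f s ∈ A := by
    intro s
    rw [hA]
    simp
  have hgB : ∀ s, g s ∈ B := by
    intro s
    rw [hB]
    simp
  have hDfac : ∀ s, ∃ t, ((toEmb (inclHomD (A \ B).card (A ∩ B).card (B \ A).card)).trans j) t = f s := by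
    intro s
    by_cases hfB : f s ∈ B
    · obtain ⟨i, hi⟩ := hjM (f s) (Finset.mem_inter.2 ⟨hfA s, hfB⟩)
      refine ⟨⟨(A \ B).card + (i : ℕ), (show _ < ((A \ B).card + (A ∩ B).card) from by have := i.isLt; omega)⟩, ?_⟩
      exact hi
    · obtain ⟨i, hi⟩ := hjL (f s) (Finset.mem_sdiff.2 ⟨hfA s, hfB⟩)
      refine ⟨⟨(i : ℕ), (show _ < ((A \ B).card + (A ∩ B).card) from by have := i.isLt; omega)⟩, ?_⟩
      exact hi
  have hCfac : ∀ s, ∃ t, ((toEmb (inclHomC (A \ B).card (A ∩ B).card (B \ A).card)).trans j) t = g s := by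
    intro s
    by_cases hgA : g s ∈ A
    · obtain ⟨i, hi⟩ := hjM (g s) (Finset.mem_inter.2 ⟨hgA, hgB s⟩)
      refine ⟨⟨(i : ℕ), (show _ < ((A ∩ B).card + (B \ A).card) from by have := i.isLt; omega)⟩, ?_⟩
      exact hi
    · obtain ⟨i, hi⟩ := hjK (g s) (Finset.mem_sdiff.2 ⟨hgB s, hgA⟩)
      refine ⟨⟨(A ∩ B).card + (i : ℕ), (show _ < ((A ∩ B).card + (B \ A).card) from by have := i.isLt; omega)⟩, ?_⟩
      have he : toEmb (inclHomC (A \ B).card (A ∩ B).card (B \ A).card)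
          (⟨(A ∩ B).card + (i : ℕ), (show _ < ((A ∩ B).card + (B \ A).card) from by have := i.isLt; omega)⟩ : Fin ((A ∩ B).card + (B \ A).card))
          = ⟨(A \ B).card + (A ∩ B).card + (i : ℕ), (show _ < ((A \ B).card + (A ∩ B).card + (B \ A).card) from by have := i.isLt; omega)⟩ := by
        apply Fin.ext
        show (A \ B).card + ((A ∩ B).card + (i : ℕ)) = (A \ B).card + (A ∩ B).card + (i : ℕ)
        omega
      show j (toEmb (inclHomC (A \ B).card (A ∩ B).card (B \ A).card)
        ⟨(A ∩ B).card + (i : ℕ), (show _ < ((A ∩ B).card + (B \ A).card) from by have := i.isLt; omega)⟩) = g s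
      rw [he]
      exact hi
  obtain ⟨al, hal⟩ := factor_emb f _ hDfac
  obtain ⟨be, hbe⟩ := factor_emb g _ hCfac
  exact ⟨(A \ B).card, (A ∩ B).card, (B \ A).card, j, al, be, hp, hq, hal, hbe⟩


/-- The cocone used to define the latching map. -/
noncomputable def latchCocone (X : IObj ⥤ Type) (a : IObj) :
    Limits.Cocone (ObjectProperty.ι (fun f : Over a => ¬ IsIso f.hom) ⋙
      Over.forget a ⋙ X) where
  pt := X.obj a
  ι :=
    { app := fun f => X.map f.obj.hom
      naturality := by
        intro f g u
        ext z
        have hw : u.hom.left ≫ g.obj.hom = f.obj.hom := Over.w u.hom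
        show X.map g.obj.hom (X.map u.hom.left z) = X.map f.obj.hom z
        rw [← hw, Functor.map_comp]; rfl }

/-- if `X : I → Set` takes all morphisms to injections and satisfies the
intersection-of-images ("flatness") condition, then all latching maps `L_𝐧(X) → X(𝐧)`
are injective. -/
theorem latching_map_injective (X : IObj ⥤ Type)
    (h1 : ∀ (a b : IObj) (f : a ⟶ b), Function.Injective (X.map f))
    (h2 : ∀ l m n : ℕ,
      Set.range (X.map (inclHomD l m n)) ∩ Set.range (X.map (inclHomC l m n)) =
        Set.range (X.map (inclHomB l m ≫ inclHomD l m n))) :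
    ∀ a : IObj, Function.Injective (latchingMap X a) := by
  intro a z1 z2 hz
  set F : ObjectProperty.FullSubcategory (fun f : Over a => ¬ IsIso f.hom) ⥤ Type :=
    ObjectProperty.ι (fun f : Over a => ¬ IsIso f.hom) ⋙ Over.forget a ⋙ X with hFdef
  obtain ⟨fo, x, hx⟩ := Limits.Types.jointly_surjective' (show Limits.colimit F from z1)
  obtain ⟨go, y, hy⟩ := Limits.Types.jointly_surjective' (show Limits.colimit F from z2)
  have hz' : X.map fo.obj.hom x = X.map go.obj.hom y := by
    have e1 : latchingMap X a (Limits.colimit.ι F fo x) = X.map fo.obj.hom x :=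
      ConcreteCategory.congr_hom (Limits.colimit.ι_desc (latchCocone X a) fo) x
    have e2 : latchingMap X a (Limits.colimit.ι F go y) = X.map go.obj.hom y :=
      ConcreteCategory.congr_hom (Limits.colimit.ι_desc (latchCocone X a) go) y
    rw [← e1, ← e2, hx, hy]
    exact hz
  obtain ⟨l, m, k, j, al, be, hp, hq, hal, hbe⟩ :=
    exists_factorization (toEmb fo.obj.hom) (toEmb go.obj.hom)
  have hpltN : fo.obj.left.n < a.n := by
    rcases lt_or_eq_of_le (I_le_of_hom fo.obj.hom) with h | h
    · exact h
    · exact absurd (I_isIso_of_n_eq fo.obj.hom h) fo.property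
  let alm : fo.obj.left ⟶ (⟨l + m⟩ : IObj) := al
  let bem : go.obj.left ⟶ (⟨m + k⟩ : IObj) := be
  let jm : (⟨l + m + k⟩ : IObj) ⟶ a := j
  haveI ha1 : IsIso alm := I_isIso_of_n_eq alm hp
  haveI ha2 : IsIso bem := I_isIso_of_n_eq bem hq
  have hfo_fact : fo.obj.hom = alm ≫ inclHomD l m k ≫ jm :=
    Function.Embedding.ext fun s => (hal s).symm
  have hgo_fact : go.obj.hom = bem ≫ inclHomC l m k ≫ jm :=
    Function.Embedding.ext fun s => (hbe s).symm
  have hmid : X.map (inclHomD l m k) (X.map alm x) = X.map (inclHomC l m k) (X.map bem y) := by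
    apply h1 _ _ jm
    have h' := hz'
    rw [hfo_fact, hgo_fact] at h'
    rw [CategoryTheory.Functor.map_comp, CategoryTheory.Functor.map_comp,
      CategoryTheory.Functor.map_comp, CategoryTheory.Functor.map_comp] at h'
    exact h'
  have hmem : X.map (inclHomD l m k) (X.map alm x) ∈
      Set.range (X.map (inclHomD l m k)) ∩ Set.range (X.map (inclHomC l m k)) :=
    ⟨⟨_, rfl⟩, ⟨_, hmid.symm⟩⟩
  rw [h2 l m k] at hmem
  obtain ⟨w, hw⟩ := hmem
  have hBD_AC : inclHomB l m ≫ inclHomD l m k = inclHomA m k ≫ inclHomC l m k := by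
    apply Function.Embedding.ext
    intro s
    apply Fin.ext
    rfl
  have hwx : X.map (inclHomB l m) w = X.map alm x :=
    h1 _ _ (inclHomD l m k) (by rw [← FunctorToTypes.map_comp_apply]; exact hw)
  have hwy : X.map (inclHomA m k) w = X.map bem y :=
    h1 _ _ (inclHomC l m k)
      (by rw [← FunctorToTypes.map_comp_apply, ← hBD_AC, hw]; exact hmid)
  have hx_eq : X.map (inclHomB l m ≫ inv alm) w = x := by
    rw [FunctorToTypes.map_comp_apply, hwx]
    change (X.map alm ≫ X.map (inv alm)) _ = _
    rw [← Functor.map_comp, IsIso.hom_inv_id, CategoryTheory.Functor.map_id]; rfl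
  have hy_eq : X.map (inclHomA m k ≫ inv bem) w = y := by
    rw [FunctorToTypes.map_comp_apply, hwy]
    change (X.map bem ≫ X.map (inv bem)) _ = _
    rw [← Functor.map_comp, IsIso.hom_inv_id, CategoryTheory.Functor.map_id]; rfl
  have hmni : ¬ IsIso ((inclHomB l m ≫ inclHomD l m k) ≫ jm : (⟨m⟩ : IObj) ⟶ a) := by
    intro hiso
    have h3 : a.n ≤ m := I_le_of_isIso _ hiso
    have hp' : fo.obj.left.n = l + m := hp
    omega
  let hbar : ObjectProperty.FullSubcategory (fun f : Over a => ¬ IsIso f.hom) :=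
    ⟨Over.mk ((inclHomB l m ≫ inclHomD l m k) ≫ jm), hmni⟩
  let u : hbar ⟶ fo := ObjectProperty.homMk (Over.homMk (inclHomB l m ≫ inv alm) (by rw [hfo_fact]; simp; rfl))
  let v : hbar ⟶ go := ObjectProperty.homMk (Over.homMk (inclHomA m k ≫ inv bem)
    (by rw [hgo_fact]
        show _ = (inclHomB l m ≫ inclHomD l m k) ≫ jm
        rw [hBD_AC]
        simp))
  have key1 : Limits.colimit.ι F fo x = Limits.colimit.ι F hbar w := by
    calc Limits.colimit.ι F fo x = Limits.colimit.ι F fo (F.map u w) := by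
          rw [show F.map u w = x from hx_eq]
      _ = Limits.colimit.ι F hbar w := ConcreteCategory.congr_hom (Limits.colimit.w F u) w
  have key2 : Limits.colimit.ι F go y = Limits.colimit.ι F hbar w := by
    calc Limits.colimit.ι F go y = Limits.colimit.ι F go (F.map v w) := by
          rw [show F.map v w = y from hy_eq]
      _ = Limits.colimit.ι F hbar w := ConcreteCategory.congr_hom (Limits.colimit.w F v) w
  have hx' : Limits.colimit.ι F fo x = z1 := hx
  have hy' : Limits.colimit.ι F go y = z2 := hy
  rw [← hx', ← hy']
  exact key1.trans key2.symm
end
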